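/- Let L = L(u,v) be a lattice spanned by linearly independent u, v ∈ ℝ² with ‖u‖ = 1 and ‖v‖ = ν ≥ 1, where u is a shortest nonzero vector of L and v is a shortest vector of L not in ℝu. For each positive even integer n let L_n = { αu + βv : α, β ∈ {0,1,…,n} } and let B_n = L_n ∩ L(2u,2v) be the points of the index-4 sublattice spanned by 2u and 2v. Then for every ε > 0 there is an N such that for all even n ≥ N, the MST-ratio satisfies μ(L_n, B_n) ≥ 5/4 − ε. In particular, every 2-dimensional lattice has asymptotic maximum MST-ratio at least 1.25. -/

import Mathlib

/-- Points of the Euclidean plane. -/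
abbrev Pt := EuclideanSpace ℝ (Fin 2)

open Classical in
/-- Total edge weight of a graph `G` on the points of `S`, w.r.t. the distance function `d`
(each unordered edge counted once). -/
noncomputable def treeWeight {V : Type*} (d : V → V → ℝ) (S : Finset V)
    (G : SimpleGraph {x // x ∈ S}) : ℝ :=
  (1 / 2) * ∑ x : {x // x ∈ S}, ∑ y : {y // y ∈ S},
    if G.Adj x y then d x.1 y.1 else 0

/-- Length of a minimum spanning tree of the finite set `S`, w.r.t. distance `d`:
the infimum, over all spanning trees of the complete graph on `S` with edge weights given
by `d`, of the total edge weight.  It is `0` if `S` has at most one point. -/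
noncomputable def mstLengthF {V : Type*} (d : V → V → ℝ) (S : Finset V) : ℝ :=
  sInf {L : ℝ | ∃ G : SimpleGraph {x // x ∈ S}, G.IsTree ∧ L = treeWeight d S G}

open Classical in
/-- MST length for a set (`0` junk value for infinite sets). -/
noncomputable def mstLength {V : Type*} (d : V → V → ℝ) (S : Set V) : ℝ :=
  if h : S.Finite then mstLengthF d h.toFinset else 0

/-- The MST-ratio `μ(A,B) = (|MST(B)| + |MST(A \ B)|) / |MST(A)|`. -/
noncomputable def mstRatio {V : Type*} (d : V → V → ℝ) (A B : Set V) : ℝ :=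
  (mstLength d B + mstLength d (A \ B)) / mstLength d A

/-- The lattice spanned by `u` and `v`. -/
def latticeSet (u v : Pt) : Set Pt := {x | ∃ i j : ℤ, x = i • u + j • v}

/-- The portion `{αu + βv : 0 ≤ α, β ≤ n}` of the lattice spanned by `u` and `v`. -/
def latticeBox (u v : Pt) (n : ℕ) : Set Pt :=
  {x | ∃ α β : ℕ, α ≤ n ∧ β ≤ n ∧ x = (α : ℝ) • u + (β : ℝ) • v}



open SimpleGraph

lemma myIsTree_of_iso {α β : Type*} {G : SimpleGraph α} {H : SimpleGraph β} (ι : G ≃g H)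
    (h : G.IsTree) : H.IsTree := by
  refine ⟨ι.connected_iff.mp h.isConnected, ?_⟩
  intro v c hc
  exact h.IsAcyclic (c.map ι.symm.toHom)
    (hc.map (fun a b hab => ι.symm.injective hab))

lemma myPathGraph_isTree (k : ℕ) : (pathGraph (k+1)).IsTree := by
  refine ⟨pathGraph_connected k, ?_⟩
  rw [isAcyclic_iff_forall_adj_isBridge]
  have key : ∀ a b : Fin (k+1), (a:ℕ)+1 = (b:ℕ) → (pathGraph (k+1)).IsBridge s(a,b) := by
    intro a b hab
    rw [isBridge_iff]
    refine fun hreach => ?_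
    have inv : ∀ x y : Fin (k+1),
        ((pathGraph (k+1)) \ fromEdgeSet {s(a,b)}).Adj x y → ((x:ℕ) ≤ a ↔ (y:ℕ) ≤ a) := by
      intro x y hxy
      rw [sdiff_adj, fromEdgeSet_adj] at hxy
      obtain ⟨h1, h2⟩ := hxy
      rw [pathGraph_adj] at h1
      have hne : x ≠ y := by
        intro he; rw [he] at h1; omega
      have h3 : ¬ (s(x,y) = s(a,b)) := by
        intro he; exact h2 ⟨by simp [he], hne⟩
      rw [Sym2.eq_iff] at h3
      push_neg at h3
      simp only [Fin.ext_iff] at h3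
      omega
    rw [reachable_iff_reflTransGen] at hreach
    have hmono : ∀ y : Fin (k+1), Relation.ReflTransGen
        ((pathGraph (k+1)) \ fromEdgeSet {s(a,b)}).Adj a y → (y:ℕ) ≤ a := by
      intro y hy
      induction hy with
      | refl => exact le_refl _
      | tail h1 h2 ih => exact ((inv _ _ h2).mp ih)
    have := hmono b hreach
    omega
  intro x y hxy
  rw [pathGraph_adj] at hxy
  rcases hxy with h | h
  · exact key x y h
  · rw [Sym2.eq_swap]; exact key y x h

/-- the spanning path graph on S induced by an equivalence -/
noncomputable def pathOn {V : Type*} {S : Finset V} {k : ℕ} (e : Fin (k+1) ≃ {x // x ∈ S}) :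
    SimpleGraph {x // x ∈ S} :=
  SimpleGraph.comap (⇑e.symm) (pathGraph (k+1))

lemma pathOn_isTree {V : Type*} {S : Finset V} {k : ℕ} (e : Fin (k+1) ≃ {x // x ∈ S}) :
    (pathOn e).IsTree := by
  refine myIsTree_of_iso (G := pathGraph (k+1)) ⟨e, ?_⟩ (myPathGraph_isTree k)
  intro i j
  simp [pathOn]

lemma treeWeight_nonneg {V : Type*} (d : V → V → ℝ) (hd0 : ∀ x y, 0 ≤ d x y)
    (S : Finset V) (G : SimpleGraph {x // x ∈ S}) : 0 ≤ treeWeight d S G := by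
  rw [treeWeight]
  apply mul_nonneg (by norm_num)
  apply Finset.sum_nonneg; intro x _
  apply Finset.sum_nonneg; intro y _
  split <;> [exact hd0 _ _; exact le_refl _]

lemma bddBelow_weights {V : Type*} (d : V → V → ℝ) (hd0 : ∀ x y, 0 ≤ d x y) (S : Finset V) :
    BddBelow {L : ℝ | ∃ G : SimpleGraph {x // x ∈ S}, G.IsTree ∧ L = treeWeight d S G} := by
  refine ⟨0, fun L hL => ?_⟩
  obtain ⟨G, _, rfl⟩ := hL
  exact treeWeight_nonneg d hd0 S G

open Finset in
lemma mstLengthF_le_path {V : Type*} (d : V → V → ℝ) (hd0 : ∀ x y, 0 ≤ d x y)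
    (hsymm : ∀ x y, d x y = d y x) (S : Finset V) (k : ℕ)
    (e : Fin (k+1) ≃ {x // x ∈ S}) :
    mstLengthF d S ≤ ∑ i : Fin (k+1),
      (if h : (i:ℕ)+1 < k+1 then d (e i).1 (e ⟨(i:ℕ)+1, h⟩).1 else 0) := by
  classical
  have h1 : mstLengthF d S ≤ treeWeight d S (pathOn e) :=
    csInf_le (bddBelow_weights d hd0 S) ⟨pathOn e, pathOn_isTree e, rfl⟩
  refine h1.trans ?_
  rw [treeWeight]
  have hre : (∑ x : {x // x ∈ S}, ∑ y : {y // y ∈ S},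
      if (pathOn e).Adj x y then d x.1 y.1 else 0)
      = ∑ i : Fin (k+1), ∑ j : Fin (k+1),
        if (pathGraph (k+1)).Adj i j then d (e i).1 (e j).1 else 0 := by
    rw [← Equiv.sum_comp e (fun x => ∑ y : {y // y ∈ S},
      if (pathOn e).Adj x y then d x.1 y.1 else 0)]
    apply Finset.sum_congr rfl
    intro i _
    rw [← Equiv.sum_comp e (fun y => if (pathOn e).Adj (e i) y then d (e i).1 y.1 else 0)]
    apply Finset.sum_congr rfl
    intro j _
    have : (pathOn e).Adj (e i) (e j) ↔ (pathGraph (k+1)).Adj i j := by simp [pathOn]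
    by_cases h : (pathGraph (k+1)).Adj i j
    · rw [if_pos (this.mpr h), if_pos h]
    · rw [if_neg (fun hc => h (this.mp hc)), if_neg h]
  rw [hre]
  have key : ∀ i j : Fin (k+1),
      (if (pathGraph (k+1)).Adj i j then d (e i).1 (e j).1 else 0)
      ≤ (if (i:ℕ)+1 = (j:ℕ) then d (e i).1 (e j).1 else 0)
        + (if (j:ℕ)+1 = (i:ℕ) then d (e i).1 (e j).1 else 0) := by
    intro i j
    by_cases h1 : (i:ℕ)+1 = (j:ℕ) <;> by_cases h2 : (j:ℕ)+1 = (i:ℕ) <;>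
      simp only [pathGraph_adj, h1, h2, if_true, if_false, if_pos, if_neg] <;>
      simp [h1, h2] <;> nlinarith [hd0 (e i).1 (e j).1]
  have hA : ∀ i : Fin (k+1), (∑ j : Fin (k+1),
      if (i:ℕ)+1 = (j:ℕ) then d (e i).1 (e j).1 else 0)
      = (if h : (i:ℕ)+1 < k+1 then d (e i).1 (e ⟨(i:ℕ)+1, h⟩).1 else 0) := by
    intro i
    by_cases h : (i:ℕ)+1 < k+1
    · rw [dif_pos h, Finset.sum_eq_single (⟨(i:ℕ)+1, h⟩ : Fin (k+1))]
      · simp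
      · intro j _ hj
        rw [if_neg]
        intro hc
        refine hj (Fin.ext ?_)
        simp only [Fin.val_mk]
        omega
      · intro habs; exact absurd (Finset.mem_univ _) habs
    · rw [dif_neg h]
      apply Finset.sum_eq_zero
      intro j _
      rw [if_neg]
      intro hc
      exact h (hc ▸ j.isLt)
  have hB : ∀ j : Fin (k+1), (∑ i : Fin (k+1),
      if (j:ℕ)+1 = (i:ℕ) then d (e i).1 (e j).1 else 0)
      = (if h : (j:ℕ)+1 < k+1 then d (e j).1 (e ⟨(j:ℕ)+1, h⟩).1 else 0) := by
    intro j
    by_cases h : (j:ℕ)+1 < k+1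
    · rw [dif_pos h, Finset.sum_eq_single (⟨(j:ℕ)+1, h⟩ : Fin (k+1))]
      · simp [hsymm]
      · intro i _ hi
        rw [if_neg]
        intro hc
        refine hi (Fin.ext ?_)
        simp only [Fin.val_mk]
        omega
      · intro habs; exact absurd (Finset.mem_univ _) habs
    · rw [dif_neg h]
      apply Finset.sum_eq_zero
      intro i _
      rw [if_neg]
      intro hc
      exact h (hc ▸ i.isLt)
  have step : (∑ i : Fin (k+1), ∑ j : Fin (k+1),
      if (pathGraph (k+1)).Adj i j then d (e i).1 (e j).1 else 0)
      ≤ (∑ i : Fin (k+1), (if h : (i:ℕ)+1 < k+1 then d (e i).1 (e ⟨(i:ℕ)+1, h⟩).1 else 0))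
        + ∑ j : Fin (k+1), (if h : (j:ℕ)+1 < k+1 then d (e j).1 (e ⟨(j:ℕ)+1, h⟩).1 else 0) := by
    calc (∑ i : Fin (k+1), ∑ j : Fin (k+1),
        if (pathGraph (k+1)).Adj i j then d (e i).1 (e j).1 else 0)
        ≤ ∑ i : Fin (k+1), ∑ j : Fin (k+1),
          ((if (i:ℕ)+1 = (j:ℕ) then d (e i).1 (e j).1 else 0)
            + (if (j:ℕ)+1 = (i:ℕ) then d (e i).1 (e j).1 else 0)) := by
          apply Finset.sum_le_sum; intro i _
          apply Finset.sum_le_sum; intro j _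
          exact key i j
      _ = (∑ i : Fin (k+1), ∑ j : Fin (k+1), (if (i:ℕ)+1 = (j:ℕ) then d (e i).1 (e j).1 else 0))
          + ∑ i : Fin (k+1), ∑ j : Fin (k+1), (if (j:ℕ)+1 = (i:ℕ) then d (e i).1 (e j).1 else 0) := by
          rw [← Finset.sum_add_distrib]
          apply Finset.sum_congr rfl
          intro i _
          rw [← Finset.sum_add_distrib]
      _ = (∑ i : Fin (k+1), (if h : (i:ℕ)+1 < k+1 then d (e i).1 (e ⟨(i:ℕ)+1, h⟩).1 else 0))
          + ∑ j : Fin (k+1), (if h : (j:ℕ)+1 < k+1 then d (e j).1 (e ⟨(j:ℕ)+1, h⟩).1 else 0) := by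
          congr 1
          · exact Finset.sum_congr rfl (fun i _ => hA i)
          · rw [Finset.sum_comm]
            exact Finset.sum_congr rfl (fun j _ => hB j)
  linarith

lemma treeSet_nonempty {V : Type*} (d : V → V → ℝ) (S : Finset V) (hS : S.Nonempty) :
    {L : ℝ | ∃ G : SimpleGraph {x // x ∈ S}, G.IsTree ∧ L = treeWeight d S G}.Nonempty := by
  have hne : Nonempty {x // x ∈ S} := ⟨⟨hS.choose, hS.choose_spec⟩⟩
  have h0 : 0 < Fintype.card {x // x ∈ S} := Fintype.card_pos_iff.mpr hne
  obtain ⟨m, hm⟩ : ∃ m, Fintype.card {x // x ∈ S} = m + 1 := ⟨_, (Nat.succ_pred_eq_of_pos h0).symm⟩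
  let e : Fin (m+1) ≃ {x // x ∈ S} := (Fintype.equivFinOfCardEq hm).symm
  exact ⟨_, pathOn e, pathOn_isTree e, rfl⟩

open Finset in
lemma le_mstLengthF {V : Type*} (d : V → V → ℝ) (c : ℝ) (hc : 0 ≤ c) (S : Finset V)
    (hS : S.Nonempty) (hd : ∀ x ∈ S, ∀ y ∈ S, x ≠ y → c ≤ d x y) :
    c * ((S.card : ℝ) - 1) ≤ mstLengthF d S := by
  classical
  apply le_csInf (treeSet_nonempty d S hS)
  rintro L ⟨G, hG, rfl⟩
  have hcard : G.edgeFinset.card + 1 = Fintype.card {x // x ∈ S} := hG.card_edgeFinset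
  rw [Fintype.card_coe] at hcard
  have hdeg : ∀ x : {x // x ∈ S}, (∑ y : {y // y ∈ S}, if G.Adj x y then c else 0)
      = (G.degree x : ℝ) * c := by
    intro x
    rw [← Finset.sum_filter]
    rw [Finset.sum_const]
    have : Finset.univ.filter (fun y => G.Adj x y) = G.neighborFinset x := by
      ext y; simp [SimpleGraph.mem_neighborFinset]
    rw [this, nsmul_eq_mul]
    rfl
  have hsum : (∑ x : {x // x ∈ S}, ∑ y : {y // y ∈ S}, if G.Adj x y then c else 0)
      = 2 * (G.edgeFinset.card : ℝ) * c := by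
    calc (∑ x : {x // x ∈ S}, ∑ y : {y // y ∈ S}, if G.Adj x y then c else 0)
        = ∑ x : {x // x ∈ S}, (G.degree x : ℝ) * c := Finset.sum_congr rfl (fun x _ => hdeg x)
      _ = (∑ x : {x // x ∈ S}, (G.degree x : ℝ)) * c := by rw [Finset.sum_mul]
      _ = 2 * (G.edgeFinset.card : ℝ) * c := by
          have := G.sum_degrees_eq_twice_card_edges
          have hcast : (∑ x : {x // x ∈ S}, (G.degree x : ℝ))
              = ((∑ x : {x // x ∈ S}, G.degree x : ℕ) : ℝ) := by push_cast; ring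
          rw [hcast, this]; push_cast; ring
  have hle : (∑ x : {x // x ∈ S}, ∑ y : {y // y ∈ S}, if G.Adj x y then c else 0)
      ≤ ∑ x : {x // x ∈ S}, ∑ y : {y // y ∈ S}, if G.Adj x y then d x.1 y.1 else 0 := by
    apply Finset.sum_le_sum; intro x _
    apply Finset.sum_le_sum; intro y _
    by_cases h : G.Adj x y
    · simp only [if_pos h]
      exact hd x.1 x.2 y.1 y.2 (fun he => (G.ne_of_adj h) (Subtype.ext he))
    · simp [h]
  rw [treeWeight]
  have hcardR : (G.edgeFinset.card : ℝ) = (S.card : ℝ) - 1 := by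
    have : ((G.edgeFinset.card + 1 : ℕ) : ℝ) = (S.card : ℝ) := by rw [hcard]
    push_cast at this
    linarith
  nlinarith [hle, hsum, hcardR]


noncomputable def phi (u v : Pt) (a b : ℕ) : Pt := (a:ℝ) • u + (b:ℝ) • v

noncomputable def snakePt (u v : Pt) (n i : ℕ) : Pt :=
  phi u v (if Even (i/(n+1)) then i % (n+1) else n - i % (n+1)) (i/(n+1))

section Lattice
variable {u v : Pt}

lemma phi_sub (a b a' b' : ℕ) :
    phi u v a b - phi u v a' b' = ((a:ℝ)-(a':ℝ)) • u + ((b:ℝ)-(b':ℝ)) • v := by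
  rw [phi, phi, sub_smul, sub_smul]; abel

lemma dist_phi (a b a' b' : ℕ) :
    dist (phi u v a b) (phi u v a' b') = ‖((a:ℝ)-(a':ℝ)) • u + ((b:ℝ)-(b':ℝ)) • v‖ := by
  rw [dist_eq_norm, phi_sub]

variable (hc : ∀ s t : ℝ, s • u + t • v = 0 → s = 0 ∧ t = 0)

include hc in
lemma phi_inj {a b a' b' : ℕ} (h : phi u v a b = phi u v a' b') : a = a' ∧ b = b' := by
  have h0 : ((a:ℝ)-(a':ℝ)) • u + ((b:ℝ)-(b':ℝ)) • v = 0 := by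
    rw [← phi_sub, h, sub_self]
  obtain ⟨h1, h2⟩ := hc _ _ h0
  constructor
  · exact_mod_cast sub_eq_zero.mp h1
  · exact_mod_cast sub_eq_zero.mp h2

lemma phi_sub_mem (a b a' b' : ℕ) : phi u v a b - phi u v a' b' ∈ latticeSet u v := by
  refine ⟨(a:ℤ)-(a':ℤ), (b:ℤ)-(b':ℤ), ?_⟩
  rw [phi_sub, ← Int.cast_smul_eq_zsmul ℝ, ← Int.cast_smul_eq_zsmul ℝ]
  push_cast
  ring_nf

include hc in
lemma dist_phi_ge_one (hushort : ∀ x ∈ latticeSet u v, x ≠ 0 → 1 ≤ ‖x‖)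
    {a b a' b' : ℕ} (h : ¬(a = a' ∧ b = b')) : 1 ≤ dist (phi u v a b) (phi u v a' b') := by
  rw [dist_eq_norm]
  apply hushort _ (phi_sub_mem a b a' b')
  intro h0
  exact h (phi_inj hc (sub_eq_zero.mp h0))

include hc in
lemma dist_phi_ge_two (hushort : ∀ x ∈ latticeSet u v, x ≠ 0 → 1 ≤ ‖x‖)
    {a b a' b' : ℕ} (h : ¬(a = a' ∧ b = b')) :
    2 ≤ dist (phi u v (2*a) (2*b)) (phi u v (2*a') (2*b')) := by
  have hw : phi u v (2*a) (2*b) - phi u v (2*a') (2*b')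
      = (2:ℝ) • (phi u v a b - phi u v a' b') := by
    rw [phi_sub, phi_sub, smul_add, smul_smul, smul_smul]
    push_cast
    ring_nf
  rw [dist_eq_norm, hw, norm_smul]
  have h1 : 1 ≤ ‖phi u v a b - phi u v a' b'‖ := by
    apply hushort _ (phi_sub_mem a b a' b')
    intro h0
    exact h (phi_inj hc (sub_eq_zero.mp h0))
  rw [Real.norm_ofNat]
  nlinarith

include hc in
lemma snake_inj {n i j : ℕ} (h : snakePt u v n i = snakePt u v n j) : i = j := by
  have hn1 : 0 < n+1 := Nat.succ_pos n
  have hri : i % (n+1) < n+1 := Nat.mod_lt _ hn1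
  have hrj : j % (n+1) < n+1 := Nat.mod_lt _ hn1
  have hdi : (n+1) * (i/(n+1)) + i % (n+1) = i := Nat.div_add_mod i (n+1)
  have hdj : (n+1) * (j/(n+1)) + j % (n+1) = j := Nat.div_add_mod j (n+1)
  obtain ⟨ha, hq⟩ := phi_inj hc h
  rw [hq] at ha
  by_cases hpar : Even (j/(n+1))
  · rw [if_pos hpar, if_pos hpar] at ha
    rw [hq, ha] at hdi
    omega
  · rw [if_neg hpar, if_neg hpar] at ha
    have hrr : i % (n+1) = j % (n+1) := by omega
    rw [hq, hrr] at hdi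
    omega

lemma snake_step {ν : ℝ} (hu : ‖u‖ = 1) (hv : ‖v‖ = ν) (n i : ℕ) :
    dist (snakePt u v n i) (snakePt u v n (i+1)) = if i % (n+1) = n then ν else 1 := by
  have hn1 : 0 < n+1 := Nat.succ_pos n
  have hr : i % (n+1) < n+1 := Nat.mod_lt _ hn1
  have hdm : (n+1) * (i/(n+1)) + i % (n+1) = i := Nat.div_add_mod i (n+1)
  by_cases hrn : i % (n+1) = n
  · rw [if_pos hrn]
    have h1 : i + 1 = (i/(n+1) + 1) * (n+1) := by
      calc i + 1 = ((n+1) * (i/(n+1)) + i % (n+1)) + 1 := by rw [hdm]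
        _ = ((n+1) * (i/(n+1)) + n) + 1 := by rw [hrn]
        _ = (i/(n+1) + 1) * (n+1) := by ring
    have hdiv : (i+1)/(n+1) = i/(n+1) + 1 := by rw [h1, Nat.mul_div_cancel _ hn1]
    have hmod : (i+1) % (n+1) = 0 := by rw [h1, Nat.mul_mod_left]
    rw [snakePt, snakePt, hdiv, hmod, hrn]
    by_cases hq : Even (i/(n+1))
    · rw [if_pos hq, if_neg (by simp [Nat.even_add_one, hq])]
      have : dist (phi u v n (i/(n+1))) (phi u v (n-0) (i/(n+1)+1)) = ‖-v‖ := by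
        rw [dist_phi]
        congr 1
        push_cast [Nat.sub_zero]
        module
      rw [this, norm_neg, hv]
    · rw [if_neg hq, if_pos (by simp [Nat.even_add_one, hq])]
      have : dist (phi u v (n-n) (i/(n+1))) (phi u v 0 (i/(n+1)+1)) = ‖-v‖ := by
        rw [dist_phi]
        congr 1
        push_cast [Nat.sub_self]
        module
      rw [this, norm_neg, hv]
  · rw [if_neg hrn]
    have h1 : i + 1 = (i % (n+1) + 1) + (i/(n+1))*(n+1) := by
      calc i + 1 = ((n+1) * (i/(n+1)) + i % (n+1)) + 1 := by rw [hdm]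
        _ = (i % (n+1) + 1) + (i/(n+1))*(n+1) := by ring
    have hdiv : (i+1)/(n+1) = i/(n+1) := by
      rw [h1, Nat.add_mul_div_right _ _ hn1, Nat.div_eq_of_lt (by omega), zero_add]
    have hmod : (i+1) % (n+1) = i % (n+1) + 1 := by
      rw [h1, Nat.add_mul_mod_self_right, Nat.mod_eq_of_lt (by omega)]
    rw [snakePt, snakePt, hdiv, hmod]
    by_cases hq : Even (i/(n+1))
    · rw [if_pos hq, if_pos hq]
      have : dist (phi u v (i % (n+1)) (i/(n+1))) (phi u v (i % (n+1) + 1) (i/(n+1))) = ‖-u‖ := by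
        rw [dist_phi]
        congr 1
        push_cast
        module
      rw [this, norm_neg, hu]
    · rw [if_neg hq, if_neg hq]
      have : dist (phi u v (n - i % (n+1)) (i/(n+1)))
          (phi u v (n - (i % (n+1) + 1)) (i/(n+1))) = ‖u‖ := by
        rw [dist_phi]
        congr 1
        push_cast [Nat.cast_sub (show i % (n+1) + 1 ≤ n by omega),
          Nat.cast_sub (show i % (n+1) ≤ n by omega)]
        module
      rw [this, hu]

end Lattice

lemma sum_range_mul_block {M : Type*} [AddCommMonoid M] (f : ℕ → M) (a b : ℕ) :
    ∑ i ∈ Finset.range (a*b), f i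
      = ∑ q ∈ Finset.range a, ∑ r ∈ Finset.range b, f (q*b+r) := by
  induction a with
  | zero => simp
  | succ a ih =>
    have hsplit : ∑ i ∈ Finset.range (a*b+b), f i
        = (∑ i ∈ Finset.range (a*b), f i) + ∑ i ∈ Finset.Ico (a*b) (a*b+b), f i := by
      rw [Finset.sum_range_add_sum_Ico f (Nat.le_add_right _ _)]
    have hico : ∑ i ∈ Finset.Ico (a*b) (a*b+b), f i = ∑ r ∈ Finset.range b, f (a*b + r) := by
      rw [Finset.sum_Ico_eq_sum_range, Nat.add_sub_cancel_left]
    rw [show (a+1)*b = a*b + b by ring, hsplit, hico, ih, Finset.sum_range_succ]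


open Classical in
lemma mstLength_eq_of_coe {V : Type*} (d : V → V → ℝ) (S : Set V) (F : Finset V)
    (h : (F : Set V) = S) : mstLength d S = mstLengthF d F := by
  subst h
  simp only [mstLength]
  rw [dif_pos F.finite_toSet]
  congr 1
  exact F.finite_toSet_toFinset

/-- Let `L = L(u,v)` with `‖u‖ = 1 ≤ ν = ‖v‖`, where `u` is a shortest nonzero lattice
vector and `v` a shortest lattice vector outside `ℝu`.  With `B_n = L_n ∩ L(2u, 2v)` the
points of the index-4 sublattice, for every `ε > 0` there is `N` such that for all even
`n ≥ N` the MST-ratio satisfies `μ(L_n, B_n) ≥ 5/4 - ε`. -/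
theorem lattice_infmax_lower (u v : Pt) (ν : ℝ)
    (hli : LinearIndependent ℝ ![u, v])
    (hu : ‖u‖ = 1) (hv : ‖v‖ = ν) (hν : 1 ≤ ν)
    (hushort : ∀ x ∈ latticeSet u v, x ≠ 0 → 1 ≤ ‖x‖)
    (hvshort : ∀ x ∈ latticeSet u v, (∀ t : ℝ, x ≠ t • u) → ν ≤ ‖x‖) :
    ∀ ε : ℝ, 0 < ε → ∃ N : ℕ, ∀ n : ℕ, Even n → N ≤ n →
      mstRatio dist (latticeBox u v n)
        (latticeBox u v n ∩ latticeSet ((2 : ℝ) • u) ((2 : ℝ) • v)) ≥ 5 / 4 - ε := by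
  classical
  have hc : ∀ s t : ℝ, s • u + t • v = 0 → s = 0 ∧ t = 0 := LinearIndependent.pair_iff.mp hli
  intro ε hε
  refine ⟨Nat.ceil ((5*(ν+1))/ε) + 2, ?_⟩
  intro n hneven hNn
  obtain ⟨m, hm⟩ := hneven
  have hn2 : 2 ≤ n := le_trans (by omega) hNn
  have hm1 : 1 ≤ m := by omega
  have hn1 : 0 < n + 1 := Nat.succ_pos n
  set FA : Finset Pt :=
    (Finset.range (n+1) ×ˢ Finset.range (n+1)).image (fun p => phi u v p.1 p.2) with hFAdef
  set FB : Finset Pt :=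
    (Finset.range (m+1) ×ˢ Finset.range (m+1)).image (fun p => phi u v (2*p.1) (2*p.2))
    with hFBdef
  have hFAmem : ∀ x : Pt, x ∈ FA ↔ ∃ a b : ℕ, a ≤ n ∧ b ≤ n ∧ x = phi u v a b := by
    intro x
    rw [hFAdef]
    simp only [Finset.mem_image, Finset.mem_product, Finset.mem_range, Prod.exists]
    constructor
    · rintro ⟨a, b, ⟨ha, hb⟩, rfl⟩; exact ⟨a, b, by omega, by omega, rfl⟩
    · rintro ⟨a, b, ha, hb, rfl⟩; exact ⟨a, b, ⟨by omega, by omega⟩, rfl⟩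
  have hFBmem : ∀ x : Pt, x ∈ FB ↔ ∃ a b : ℕ, a ≤ m ∧ b ≤ m ∧ x = phi u v (2*a) (2*b) := by
    intro x
    rw [hFBdef]
    simp only [Finset.mem_image, Finset.mem_product, Finset.mem_range, Prod.exists]
    constructor
    · rintro ⟨a, b, ⟨ha, hb⟩, rfl⟩; exact ⟨a, b, by omega, by omega, rfl⟩
    · rintro ⟨a, b, ha, hb, rfl⟩; exact ⟨a, b, ⟨by omega, by omega⟩, rfl⟩
  have hFAcoe : (FA : Set Pt) = latticeBox u v n := by
    ext x
    rw [Finset.mem_coe, hFAmem]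
    simp only [latticeBox, Set.mem_setOf_eq, phi]
  have hzs : ∀ (i : ℤ) (w : Pt), i • ((2:ℝ) • w) = (2*(i:ℝ)) • w := by
    intro i w
    rw [← Int.cast_smul_eq_zsmul ℝ i, smul_smul]
    congr 1
    ring
  have hFBcoe : (FB : Set Pt)
      = latticeBox u v n ∩ latticeSet ((2:ℝ) • u) ((2:ℝ) • v) := by
    ext x
    rw [Finset.mem_coe, hFBmem]
    constructor
    · rintro ⟨a, b, ha, hb, rfl⟩
      refine ⟨⟨2*a, 2*b, by omega, by omega, rfl⟩, (a:ℤ), (b:ℤ), ?_⟩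
      rw [hzs, hzs, phi]
      push_cast
      ring_nf
    · rintro ⟨⟨α, β, hα, hβ, rfl⟩, i, j, hxL⟩
      rw [hzs, hzs] at hxL
      have h0 : ((α:ℝ) - 2*(i:ℝ)) • u + ((β:ℝ) - 2*(j:ℝ)) • v = 0 := by
        have hdf : ((α:ℝ) - 2*(i:ℝ)) • u + ((β:ℝ) - 2*(j:ℝ)) • v
            = ((α:ℝ) • u + (β:ℝ) • v) - ((2*(i:ℝ)) • u + (2*(j:ℝ)) • v) := by
          module
        rw [hdf, ← hxL, sub_self]
      obtain ⟨h1, h2⟩ := hc _ _ h0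
      have hai : (α:ℤ) = 2*i := by
        have : (α:ℝ) = 2*(i:ℝ) := by linarith
        exact_mod_cast this
      have hbj : (β:ℤ) = 2*j := by
        have : (β:ℝ) = 2*(j:ℝ) := by linarith
        exact_mod_cast this
      refine ⟨α/2, β/2, by omega, by omega, ?_⟩
      have hα2 : 2*(α/2) = α := by omega
      have hβ2 : 2*(β/2) = β := by omega
      rw [hα2, hβ2, phi]
  have hFAcard : FA.card = (n+1)*(n+1) := by
    rw [hFAdef, Finset.card_image_of_injOn, Finset.card_product, Finset.card_range]
    intro p _ q _ hpq
    have h := phi_inj hc hpq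
    exact Prod.ext h.1 h.2
  have hFBcard : FB.card = (m+1)*(m+1) := by
    rw [hFBdef, Finset.card_image_of_injOn, Finset.card_product, Finset.card_range]
    intro p _ q _ hpq
    have h := phi_inj hc hpq
    exact Prod.ext (by omega) (by omega)
  have hFBsub : FB ⊆ FA := by
    intro x hx
    obtain ⟨a, b, ha, hb, rfl⟩ := (hFBmem x).mp hx
    exact (hFAmem _).mpr ⟨2*a, 2*b, by omega, by omega, rfl⟩
  have hFDcoe : ((FA \ FB : Finset Pt) : Set Pt)
      = latticeBox u v n \ (latticeBox u v n ∩ latticeSet ((2:ℝ) • u) ((2:ℝ) • v)) := by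
    rw [Finset.coe_sdiff, hFAcoe, hFBcoe]
  have hsubcard : (m+1)*(m+1) ≤ (n+1)*(n+1) := Nat.mul_le_mul (by omega) (by omega)
  have hFDcard : (FA \ FB).card = (n+1)*(n+1) - (m+1)*(m+1) := by
    rw [Finset.card_sdiff_of_subset hFBsub, hFAcard, hFBcard]
  have hFAne : FA.Nonempty := ⟨phi u v 0 0, (hFAmem _).mpr ⟨0, 0, by omega, by omega, rfl⟩⟩
  have hFBne : FB.Nonempty := ⟨phi u v (2*0) (2*0), (hFBmem _).mpr ⟨0, 0, by omega, by omega, rfl⟩⟩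
  have hFDne : (FA \ FB).Nonempty := by
    refine ⟨phi u v 1 0, Finset.mem_sdiff.mpr ⟨(hFAmem _).mpr ⟨1, 0, by omega, by omega, rfl⟩, ?_⟩⟩
    intro hmem
    obtain ⟨a, b, _, _, hab⟩ := (hFBmem _).mp hmem
    have := phi_inj hc hab
    omega
  have hdA : ∀ x ∈ FA, ∀ y ∈ FA, x ≠ y → (1:ℝ) ≤ dist x y := by
    intro x hx y hy hxy
    obtain ⟨a, b, _, _, rfl⟩ := (hFAmem x).mp hx
    obtain ⟨a', b', _, _, rfl⟩ := (hFAmem y).mp hy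
    exact dist_phi_ge_one hc hushort (fun hab => hxy (by rw [hab.1, hab.2]))
  have hdB : ∀ x ∈ FB, ∀ y ∈ FB, x ≠ y → (2:ℝ) ≤ dist x y := by
    intro x hx y hy hxy
    obtain ⟨a, b, _, _, rfl⟩ := (hFBmem x).mp hx
    obtain ⟨a', b', _, _, rfl⟩ := (hFBmem y).mp hy
    exact dist_phi_ge_two hc hushort (fun hab => hxy (by rw [hab.1, hab.2]))
  have hdD : ∀ x ∈ FA \ FB, ∀ y ∈ FA \ FB, x ≠ y → (1:ℝ) ≤ dist x y := by
    intro x hx y hy hxy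
    exact hdA x (Finset.mem_sdiff.mp hx).1 y (Finset.mem_sdiff.mp hy).1 hxy
  have hlowA := le_mstLengthF dist 1 (by norm_num) FA hFAne hdA
  have hlowB := le_mstLengthF dist 2 (by norm_num) FB hFBne hdB
  have hlowD := le_mstLengthF dist 1 (by norm_num) (FA \ FB) hFDne hdD
  -- the snake upper bound for FA
  set k : ℕ := n*n + 2*n with hkdef
  have hk' : k + 1 = (n+1)*(n+1) := by rw [hkdef]; ring
  have hgmem : ∀ i : Fin (k+1), snakePt u v n (i:ℕ) ∈ FA := by
    intro i
    have hr : (i:ℕ) % (n+1) < n+1 := Nat.mod_lt _ hn1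
    have hqb : (i:ℕ) / (n+1) ≤ n := by
      have hlt : (i:ℕ) < (n+1)*(n+1) := hk' ▸ i.isLt
      exact Nat.lt_succ_iff.mp ((Nat.div_lt_iff_lt_mul hn1).mpr hlt)
    refine (hFAmem _).mpr ⟨_, _, ?_, hqb, rfl⟩
    split <;> omega
  set g : Fin (k+1) → {x // x ∈ FA} := fun i => ⟨snakePt u v n (i:ℕ), hgmem i⟩ with hgdef
  have hg_inj : Function.Injective g := by
    intro i j hij
    exact Fin.ext (snake_inj hc (Subtype.ext_iff.mp hij))
  have hg_bij : Function.Bijective g := by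
    rw [Fintype.bijective_iff_injective_and_card]
    refine ⟨hg_inj, ?_⟩
    rw [Fintype.card_fin, Fintype.card_coe, hFAcard, hk']
  set e : Fin (k+1) ≃ {x // x ∈ FA} := Equiv.ofBijective g hg_bij with hedef
  have hupperA : mstLengthF dist FA ≤ ((n:ℝ)+1) * ((n:ℝ) + ν) := by
    refine (mstLengthF_le_path dist (fun x y => dist_nonneg) (fun x y => dist_comm x y)
      FA k e).trans ?_
    have hsum1 : (∑ i : Fin (k+1),
        if h : (i:ℕ)+1 < k+1 then dist (e i).1 (e ⟨(i:ℕ)+1, h⟩).1 else 0)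
        ≤ ∑ i : Fin (k+1), (if (i:ℕ) % (n+1) = n then ν else 1) := by
      apply Finset.sum_le_sum
      intro i _
      by_cases h : (i:ℕ)+1 < k+1
      · rw [dif_pos h]
        have he1 : (e i).1 = snakePt u v n (i:ℕ) := rfl
        have he2 : (e ⟨(i:ℕ)+1, h⟩).1 = snakePt u v n ((i:ℕ)+1) := rfl
        rw [he1, he2, snake_step hu hv n (i:ℕ)]
      · rw [dif_neg h]
        split
        · linarith
        · norm_num
    refine hsum1.trans (le_of_eq ?_)
    rw [Fin.sum_univ_eq_sum_range (fun i => if i % (n+1) = n then ν else (1:ℝ)) (k+1), hk',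
      sum_range_mul_block (fun i => if i % (n+1) = n then ν else (1:ℝ)) (n+1) (n+1)]
    have hinner : ∀ q ∈ Finset.range (n+1),
        (∑ r ∈ Finset.range (n+1), if (q*(n+1)+r) % (n+1) = n then ν else (1:ℝ))
        = (n:ℝ) + ν := by
      intro q _
      have hcongr : ∀ r ∈ Finset.range (n+1),
          (if (q*(n+1)+r) % (n+1) = n then ν else (1:ℝ)) = (if r = n then ν else 1) := by
        intro r hr
        rw [Finset.mem_range] at hr
        have hmr : (q*(n+1)+r) % (n+1) = r := by
          rw [mul_comm, Nat.mul_add_mod, Nat.mod_eq_of_lt hr]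
        rw [hmr]
      rw [Finset.sum_congr rfl hcongr, Finset.sum_range_succ, if_pos rfl,
        Finset.sum_congr rfl (fun r hr => if_neg (by rw [Finset.mem_range] at hr; omega)),
        Finset.sum_const, Finset.card_range, nsmul_eq_mul, mul_one]
    rw [Finset.sum_congr rfl hinner, Finset.sum_const, Finset.card_range, nsmul_eq_mul]
    push_cast
    ring
  -- pass to mstLength
  have hmA : mstLength dist (latticeBox u v n) = mstLengthF dist FA :=
    mstLength_eq_of_coe dist _ FA hFAcoe
  have hmB : mstLength dist (latticeBox u v n ∩ latticeSet ((2:ℝ) • u) ((2:ℝ) • v))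
      = mstLengthF dist FB := mstLength_eq_of_coe dist _ FB hFBcoe
  have hmD : mstLength dist
      (latticeBox u v n \ (latticeBox u v n ∩ latticeSet ((2:ℝ) • u) ((2:ℝ) • v)))
      = mstLengthF dist (FA \ FB) := mstLength_eq_of_coe dist _ (FA \ FB) hFDcoe
  have hratio : mstRatio dist (latticeBox u v n)
      (latticeBox u v n ∩ latticeSet ((2:ℝ) • u) ((2:ℝ) • v))
      = (mstLengthF dist FB + mstLengthF dist (FA \ FB)) / mstLengthF dist FA := by
    rw [mstRatio, hmA, hmB, hmD]
  rw [ge_iff_le, hratio]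
  -- numeric endgame
  set x : ℝ := (m:ℝ) with hxdef
  have hxn : (n:ℝ) = 2*x := by rw [hxdef]; push_cast [hm]; ring
  have hx1 : (1:ℝ) ≤ x := by rw [hxdef]; exact_mod_cast hm1
  have hcA : ((FA.card : ℕ) : ℝ) = (2*x+1)^2 := by
    rw [hFAcard, hxdef]; push_cast [hm]; ring
  have hcB : ((FB.card : ℕ) : ℝ) = (x+1)^2 := by
    rw [hFBcard, hxdef]; push_cast; ring
  have hcD : (((FA \ FB).card : ℕ) : ℝ) = (2*x+1)^2 - (x+1)^2 := by
    rw [hFDcard, Nat.cast_sub hsubcard, hxdef]; push_cast [hm]; ring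
  rw [hcA] at hlowA
  rw [hcB] at hlowB
  rw [hcD] at hlowD
  set mA := mstLengthF dist FA with hmA2
  set mB := mstLengthF dist FB with hmB2
  set mD := mstLengthF dist (FA \ FB) with hmD2
  clear_value mA mB mD
  clear_value x
  clear hmA2 hmB2 hmD2 hcA hcB hcD hratio hmA hmB hmD hdA hdB hdD
  clear hg_inj hg_bij hedef e hgdef g hgmem hk' hkdef
  clear hFAne hFBne hFDne hFDcard hsubcard hFDcoe hFBsub hFBcard hFAcard
  clear hFBcoe hzs hFAcoe hFBmem hFAmem hFBdef FB hFAdef FA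
  clear hc hli hu hv hushort hvshort hxdef
  have hApos : 0 < mA := by nlinarith [hlowA, hx1]
  rw [le_div_iff₀ hApos]
  rw [hxn] at hupperA
  have hNreal : 5*(ν+1) ≤ ε*(2*x) := by
    have h1 : ((5*(ν+1))/ε : ℝ) ≤ (Nat.ceil ((5*(ν+1))/ε) : ℝ) := Nat.le_ceil _
    have h2 : ((Nat.ceil ((5*(ν+1))/ε) + 2 : ℕ) : ℝ) ≤ (n:ℝ) := by exact_mod_cast hNn
    rw [hxn] at h2
    push_cast at h2
    have h3 : (5*(ν+1))/ε ≤ 2*x := by linarith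
    calc 5*(ν+1) = ((5*(ν+1))/ε)*ε := by field_simp
      _ ≤ (2*x)*ε := mul_le_mul_of_nonneg_right h3 hε.le
      _ = ε*(2*x) := by ring
  by_cases hcase : (5/4 - ε : ℝ) ≤ 0
  · have h1 : (5/4 - ε) * mA ≤ 0 :=
      mul_nonpos_of_nonpos_of_nonneg hcase hApos.le
    nlinarith [hlowB, hlowD, hx1]
  · push_neg at hcase
    have step1 : (5/4 - ε) * mA ≤ (5/4 - ε)*((2*x+1)*(2*x+ν)) :=
      mul_le_mul_of_nonneg_left hupperA hcase.le
    have step2 : (5/4 - ε)*((2*x+1)*(2*x+ν)) ≤ 2*((x+1)^2 - 1) + (((2*x+1)^2 - (x+1)^2) - 1) := by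
      nlinarith [hNreal, hx1, hν, hε.le,
        mul_le_mul_of_nonneg_left hNreal (by linarith : (0:ℝ) ≤ x),
        mul_nonneg (by linarith : (0:ℝ) ≤ ν - 1) (by linarith : (0:ℝ) ≤ x - 1),
        mul_nonneg hε.le (by nlinarith : (0:ℝ) ≤ 2*x*ν + 2*x + ν)]
    linarith [hlowB, hlowD]
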